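/- If Z_1, ..., Z_{N+1} are i.i.d. real random variables with a continuous (atomless) distribution, then P(Z_{N+1} ≤ Z_{(κ)}) = κ/(N+1) for every κ ∈ {1,...,N}, where Z_{(κ)} is the κ-th order statistic of Z_1,...,Z_N. -/

import Mathlib

open MeasureTheory ProbabilityTheory
open scoped ENNReal


noncomputable def orderStat {n : ℕ} (f : Fin n → ℝ) (i : Fin n) : ℝ :=
  f (Tuple.sort f i)

lemma card_filter_comp_equiv {α β : Type*} [Fintype α] [Fintype β] (e : α ≃ β)
    (p : β → Prop) [DecidablePred p] :
    (Finset.univ.filter fun i => p (e i)).card = (Finset.univ.filter p).card :=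
  Finset.card_equiv e (by simp)

lemma le_orderStat_iff {n : ℕ} (f : Fin n → ℝ) (k : Fin n) (x : ℝ) :
    x ≤ orderStat f k ↔ ((Finset.univ.filter fun i => f i < x).card ≤ (k : ℕ)) := by
  classical
  set σ := Tuple.sort f with hσ
  have hmono : Monotone (f ∘ σ) := Tuple.monotone_sort f
  have hcard : (Finset.univ.filter fun i => f i < x).card
      = (Finset.univ.filter fun i => f (σ i) < x).card :=
    (card_filter_comp_equiv σ (fun i => f i < x)).symm
  rw [hcard, orderStat]
  constructor
  · intro h
    have hsub : (Finset.univ.filter fun i => f (σ i) < x) ⊆ Finset.Iio k := by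
      intro i hi
      simp only [Finset.mem_filter, Finset.mem_univ, true_and] at hi
      rw [Finset.mem_Iio]
      by_contra hik
      have hki : k ≤ i := not_lt.mp hik
      exact absurd (h.trans (hmono hki)) (not_le.mpr hi)
    calc (Finset.univ.filter fun i => f (σ i) < x).card
        ≤ (Finset.Iio k).card := Finset.card_le_card hsub
      _ = (k : ℕ) := Fin.card_Iio k
  · intro h
    by_contra hx
    push_neg at hx
    have hsub : Finset.Iic k ⊆ (Finset.univ.filter fun i => f (σ i) < x) := by
      intro i hi
      simp only [Finset.mem_filter, Finset.mem_univ, true_and]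
      exact lt_of_le_of_lt (hmono (Finset.mem_Iic.mp hi)) hx
    have := Finset.card_le_card hsub
    rw [Fin.card_Iic] at this
    omega

/-- rank of coordinate `p` in the tuple `z` -/
noncomputable def rnk {m : ℕ} (z : Fin m → ℝ) (p : Fin m) : ℕ :=
  (Finset.univ.filter fun i => z i ≤ z p).card

lemma rnk_pos {m : ℕ} (z : Fin m → ℝ) (p : Fin m) : 1 ≤ rnk z p := by
  have hp : p ∈ Finset.univ.filter fun i => z i ≤ z p := by simp
  exact Finset.card_pos.mpr ⟨p, hp⟩

lemma rnk_le {m : ℕ} (z : Fin m → ℝ) (p : Fin m) : rnk z p ≤ m := by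
  classical
  calc rnk z p ≤ Finset.univ.card := Finset.card_le_card (Finset.filter_subset _ _)
    _ = m := Finset.card_univ.trans (Fintype.card_fin m)

lemma rnk_strictMono {m : ℕ} {z : Fin m → ℝ} {p q : Fin m}
    (hpq : z p < z q) : rnk z p < rnk z q := by
  classical
  apply Finset.card_lt_card
  constructor
  · intro i hi
    simp only [Finset.mem_filter, Finset.mem_univ, true_and] at hi ⊢
    exact hi.trans hpq.le
  · intro hsub
    have hq : q ∈ Finset.univ.filter fun i => z i ≤ z q := by simp
    have := hsub hq
    simp only [Finset.mem_filter, Finset.mem_univ, true_and] at this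
    exact absurd hpq (not_lt.mpr this)

lemma rnk_injective {m : ℕ} {z : Fin m → ℝ} (hz : Function.Injective z) :
    Function.Injective (rnk z) := by
  intro p q h
  by_contra hne
  rcases lt_trichotomy (z p) (z q) with hlt | heq | hgt
  · exact absurd h (Nat.ne_of_lt (rnk_strictMono hlt))
  · exact hne (hz heq)
  · exact absurd h.symm (Nat.ne_of_lt (rnk_strictMono hgt))

lemma rnk_surj {m : ℕ} {z : Fin m → ℝ} (hz : Function.Injective z)
    {j : ℕ} (hj1 : 1 ≤ j) (hjm : j ≤ m) : ∃ p, rnk z p = j := by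
  classical
  have himg : Finset.univ.image (rnk z) ⊆ Finset.Icc 1 m := by
    intro a ha
    simp only [Finset.mem_image] at ha
    obtain ⟨p, _, rfl⟩ := ha
    exact Finset.mem_Icc.mpr ⟨rnk_pos z p, rnk_le z p⟩
  have hcard : (Finset.univ.image (rnk z)).card = m := by
    rw [Finset.card_image_of_injective _ (rnk_injective hz)]
    simp
  have : Finset.univ.image (rnk z) = Finset.Icc 1 m := by
    apply Finset.eq_of_subset_of_card_le himg
    rw [hcard, Nat.card_Icc]
    omega
  have hjmem : j ∈ Finset.univ.image (rnk z) := by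
    rw [this]; exact Finset.mem_Icc.mpr ⟨hj1, hjm⟩
  simpa using hjmem


section Aux

variable {n : ℕ} (μ : Measure ℝ) [IsProbabilityMeasure μ]

lemma map_eq_pi {Ω : Type*} [MeasurableSpace Ω] (P : Measure Ω) [IsProbabilityMeasure P]
    (Z : Fin n → Ω → ℝ) (hmeas : ∀ i, Measurable (Z i))
    (hident : ∀ i, Measure.map (Z i) P = μ)
    (hindep : iIndepFun Z P) :
    Measure.map (fun ω i => Z i ω) P = Measure.pi (fun _ => μ) := by
  refine (Measure.pi_eq fun s hs => ?_).symm
  rw [Measure.map_apply (measurable_pi_lambda _ fun i => hmeas i) (MeasurableSet.univ_pi hs)]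
  have hpre : (fun ω i => Z i ω) ⁻¹' Set.pi Set.univ s = ⋂ i, Z i ⁻¹' s i := by
    ext ω; simp [Set.mem_pi]
  rw [hpre, hindep.meas_iInter (fun i => ⟨s i, hs i, rfl⟩)]
  refine Finset.prod_congr rfl fun i _ => ?_
  rw [← hident i, Measure.map_apply (hmeas i) (hs i)]

lemma pi_comp_perm (σ : Equiv.Perm (Fin n)) :
    MeasurePreserving (fun z : Fin n → ℝ => z ∘ σ)
      (Measure.pi fun _ => μ) (Measure.pi fun _ => μ) := by
  have h := measurePreserving_piCongrLeft (fun _ : Fin n => μ) σ.symm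
  have heq : ⇑(MeasurableEquiv.piCongrLeft (fun _ : Fin n => ℝ) σ.symm)
      = fun z : Fin n → ℝ => z ∘ σ := by
    funext z
    funext i
    have h1 := Equiv.piCongrLeft_apply_apply (fun _ : Fin n => ℝ) σ.symm z (σ i)
    have h2 : σ.symm (σ i) = i := σ.symm_apply_apply i
    rw [h2] at h1
    simpa [MeasurableEquiv.coe_piCongrLeft] using h1
  rwa [heq] at h

lemma pi_map_pair {i j : Fin n} (hij : i ≠ j) :
    Measure.map (fun z : Fin n → ℝ => (z i, z j)) (Measure.pi fun _ => μ) = μ.prod μ := by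
  refine (Measure.prod_eq fun s t hs ht => ?_).symm
  rw [Measure.map_apply (by fun_prop) (hs.prod ht)]
  have hpre : (fun z : Fin n → ℝ => (z i, z j)) ⁻¹' (s ×ˢ t)
      = Set.pi Set.univ (fun l => if l = i then s else if l = j then t else Set.univ) := by
    ext z
    simp only [Set.mem_preimage, Set.mem_prod, Set.mem_pi, Set.mem_univ, true_implies]
    constructor
    · rintro ⟨h1, h2⟩ l
      by_cases hli : l = i
      · simp [hli, h1]
      · by_cases hlj : l = j
        · subst hlj; simp [Ne.symm hij, h2]
        · simp [hli, hlj]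
    · intro h
      constructor
      · have := h i; simpa using this
      · have := h j; simpa [hij.symm] using this
  rw [hpre, Measure.pi_pi]
  have : ∀ l : Fin n, MeasurableSet (if l = i then s else if l = j then t else Set.univ) := by
    intro l
    by_cases hli : l = i
    · simpa [hli] using hs
    · by_cases hlj : l = j
      · subst hlj; simp only [if_neg hli]; simpa [hli] using ht
      · simp [hli, hlj]
  rw [← Finset.prod_subset (Finset.subset_univ ({i, j} : Finset (Fin n)))
    (fun l _ hl => ?_)]
  · rw [Finset.prod_pair hij]
    rw [if_pos rfl, if_neg (Ne.symm hij), if_pos rfl]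
  · simp only [Finset.mem_insert, Finset.mem_singleton, not_or] at hl
    simp [hl.1, hl.2]

lemma pi_eq_coords_null [NullSingletonClass μ] {i j : Fin n} (hij : i ≠ j) :
    (Measure.pi fun _ : Fin n => μ) {z | z i = z j} = 0 := by
  have hD : MeasurableSet {p : ℝ × ℝ | p.1 = p.2} :=
    measurableSet_eq_fun measurable_fst measurable_snd
  have hmap := pi_map_pair μ hij
  have : {z : Fin n → ℝ | z i = z j}
      = (fun z : Fin n → ℝ => (z i, z j)) ⁻¹' {p : ℝ × ℝ | p.1 = p.2} := rfl
  rw [this, ← Measure.map_apply (by fun_prop) hD, hmap, Measure.prod_apply hD]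
  have : ∀ x : ℝ, (Prod.mk x ⁻¹' {p : ℝ × ℝ | p.1 = p.2}) = {x} := by
    intro x; ext y; simp [eq_comm]
  simp only [this, measure_singleton, lintegral_const, zero_mul]

end Aux


/-- rank helper lemmas continue -/

noncomputable def cnt {N : ℕ} (z : Fin (N + 1) → ℝ) : ℕ :=
  (Finset.univ.filter fun i : Fin N => z i.castSucc < z (Fin.last N)).card



lemma measurable_rnk {m : ℕ} (p : Fin m) : Measurable fun z : Fin m → ℝ => rnk z p := by
  have h : (fun z : Fin m → ℝ => rnk z p)
      = fun z => ∑ i : Fin m, if z i ≤ z p then 1 else 0 := by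
    funext z; rw [rnk, Finset.card_filter]
  rw [h]
  exact Finset.measurable_sum _ fun i _ =>
    Measurable.ite (measurableSet_le (measurable_pi_apply i) (measurable_pi_apply p))
      measurable_const measurable_const

lemma measurable_cnt {N : ℕ} : Measurable (cnt (N := N)) := by
  have h : (cnt (N := N))
      = fun z => ∑ i : Fin N, if z i.castSucc < z (Fin.last N) then 1 else 0 := by
    funext z; rw [cnt, Finset.card_filter]
  rw [h]
  exact Finset.measurable_sum _ fun i _ =>
    Measurable.ite (measurableSet_lt (measurable_pi_apply _) (measurable_pi_apply _))
      measurable_const measurable_const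

lemma measurableSet_injective {m : ℕ} :
    MeasurableSet {z : Fin m → ℝ | Function.Injective z} := by
  have h : {z : Fin m → ℝ | Function.Injective z}
      = ⋂ (i) (j) (_ : i ≠ j), {z : Fin m → ℝ | z i ≠ z j} := by
    ext z
    simp only [Set.mem_setOf_eq, Set.mem_iInter]
    constructor
    · intro hz i j hij hab
      exact hij (hz hab)
    · intro h a b hab
      by_contra hne
      exact h a b hne hab
  rw [h]
  exact MeasurableSet.iInter fun i => MeasurableSet.iInter fun j =>
    MeasurableSet.iInter fun _ =>
      (measurableSet_eq_fun (measurable_pi_apply i) (measurable_pi_apply j)).compl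

lemma pi_injective_ae {n : ℕ} (μ : Measure ℝ) [IsProbabilityMeasure μ] [NullSingletonClass μ] :
    (Measure.pi fun _ : Fin n => μ) {z | Function.Injective z}ᶜ = 0 := by
  have hsub : {z : Fin n → ℝ | Function.Injective z}ᶜ ⊆
      ⋃ (i : Fin n) (j : Fin n) (_ : i ≠ j), {z : Fin n → ℝ | z i = z j} := by
    intro z hz
    simp only [Set.mem_compl_iff, Set.mem_setOf_eq, Function.Injective] at hz
    push_neg at hz
    obtain ⟨a, b, hab, hne⟩ := hz
    exact Set.mem_iUnion.mpr ⟨a, Set.mem_iUnion.mpr ⟨b, Set.mem_iUnion.mpr ⟨hne, hab⟩⟩⟩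
  refine measure_mono_null hsub ?_
  refine measure_iUnion_null fun i => measure_iUnion_null fun j => measure_iUnion_null fun hne =>
    pi_eq_coords_null μ hne

lemma rnk_last_eq {N : ℕ} {z : Fin (N + 1) → ℝ} (hz : Function.Injective z) :
    rnk z (Fin.last N) = cnt z + 1 := by
  rw [rnk, cnt]
  have hset : (Finset.univ.filter fun i : Fin (N + 1) => z i ≤ z (Fin.last N))
      = insert (Fin.last N)
          ((Finset.univ.filter fun i : Fin N => z i.castSucc < z (Fin.last N)).image
            Fin.castSucc) := by
    ext i
    simp only [Finset.mem_filter, Finset.mem_univ, true_and, Finset.mem_insert,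
      Finset.mem_image]
    constructor
    · intro hi
      rcases Fin.eq_castSucc_or_eq_last i with ⟨m, rfl⟩ | rfl
      · right
        exact ⟨m, lt_of_le_of_ne hi (fun h => (Fin.castSucc_lt_last m).ne (hz h)), rfl⟩
      · left; rfl
    · rintro (rfl | ⟨m, hm, rfl⟩)
      · exact le_refl _
      · exact hm.le
  have hnotmem : Fin.last N ∉
      (Finset.univ.filter fun i : Fin N => z i.castSucc < z (Fin.last N)).image
        Fin.castSucc := by
    intro hmem
    obtain ⟨m, _, hm⟩ := Finset.mem_image.mp hmem
    exact (Fin.castSucc_lt_last m).ne hm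
  rw [hset, Finset.card_insert_of_notMem hnotmem, Finset.card_image_of_injective _
    (Fin.castSucc_injective N)]

/-- Exact conformal coverage: if Z_1,…,Z_{N+1} are i.i.d. with an atomless
distribution, then P(Z_{N+1} ≤ Z_{(κ)}) = κ/(N+1) for every κ ∈ {1,…,N}. -/
theorem iid_atomless_order_stat_exact_coverage
    {Ω : Type*} [MeasurableSpace Ω] (P : Measure Ω) [IsProbabilityMeasure P]
    (N : ℕ) (hN : 0 < N) (Z : Fin (N + 1) → Ω → ℝ)
    (hmeas : ∀ i, Measurable (Z i))
    (μ : Measure ℝ) [IsProbabilityMeasure μ] [NullSingletonClass μ]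
    (hident : ∀ i, Measure.map (Z i) P = μ)
    (hindep : iIndepFun Z P)
    (κ : ℕ) (hκ1 : 1 ≤ κ) (hκN : κ ≤ N) :
    P {ω | Z (Fin.last N) ω ≤
        orderStat (fun i : Fin N => Z i.castSucc ω) ⟨κ - 1, by omega⟩} =
      ENNReal.ofReal ((κ : ℝ) / (N + 1)) := by
  classical
  set ν : Measure (Fin (N + 1) → ℝ) := Measure.pi fun _ => μ with hνdef
  have hZm : Measurable fun ω i => Z i ω := measurable_pi_lambda _ fun i => hmeas i
  have hmap : Measure.map (fun ω i => Z i ω) P = ν := map_eq_pi μ P Z hmeas hident hindep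
  set E : Set (Fin (N + 1) → ℝ) := {z | cnt z ≤ κ - 1} with hEdef
  have hEmeas : MeasurableSet E := measurable_cnt (show MeasurableSet (Set.Iic (κ - 1)) from trivial)
  have hset : {ω | Z (Fin.last N) ω ≤
      orderStat (fun i : Fin N => Z i.castSucc ω) ⟨κ - 1, by omega⟩}
      = (fun ω i => Z i ω) ⁻¹' E := by
    ext ω
    simp only [Set.mem_setOf_eq, Set.mem_preimage, hEdef, cnt]
    rw [le_orderStat_iff]
  have hPE : P {ω | Z (Fin.last N) ω ≤
      orderStat (fun i : Fin N => Z i.castSucc ω) ⟨κ - 1, by omega⟩} = ν E := by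
    rw [hset, ← Measure.map_apply hZm hEmeas, hmap]
  set T : Set (Fin (N + 1) → ℝ) := {z | Function.Injective z} with hTdef
  have hTmeas : MeasurableSet T := measurableSet_injective
  have hTc : ν Tᶜ = 0 := pi_injective_ae μ
  have hT1 : ν T = 1 := by
    have h := ae_eq_univ.mpr hTc
    rw [measure_congr h, measure_univ]
  set s : Fin (N + 1) → ℕ → Set (Fin (N + 1) → ℝ) :=
    fun p j => T ∩ {z | rnk z p = j} with hsdef
  have hsmeas : ∀ p j, MeasurableSet (s p j) := fun p j =>
    hTmeas.inter ((measurable_rnk p) (show MeasurableSet {j} from trivial))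
  have hconst : ∀ p j, ν (s p j) = ν (s (Fin.last N) j) := by
    intro p j
    set σ := Equiv.swap (Fin.last N) p with hσdef
    have hσp : σ (Fin.last N) = p := Equiv.swap_apply_left _ _
    have hmp := pi_comp_perm μ σ
    have hpre : (fun z : Fin (N + 1) → ℝ => z ∘ σ) ⁻¹' (s (Fin.last N) j) = s p j := by
      ext z
      simp only [Set.mem_preimage, hsdef, Set.mem_inter_iff, Set.mem_setOf_eq, hTdef]
      have hinj : Function.Injective (z ∘ σ) ↔ Function.Injective z :=
        Equiv.injective_comp σ z
      have hr : rnk (z ∘ σ) (Fin.last N) = rnk z p := by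
        rw [rnk, rnk, ← hσp]
        exact card_filter_comp_equiv σ (fun i => z i ≤ z (σ (Fin.last N)))
      rw [hinj, hr]
    have := hmp.measure_preimage (hsmeas (Fin.last N) j).nullMeasurableSet
    rw [hpre] at this
    exact this
  have hNtop : ((N : ℝ≥0∞) + 1) ≠ ⊤ := by simp
  have hNne : ((N : ℝ≥0∞) + 1) ≠ 0 := by simp
  have hpart : ∀ j, 1 ≤ j → j ≤ N + 1 → ν (s (Fin.last N) j) = ((N : ℝ≥0∞) + 1)⁻¹ := by
    intro j hj1 hj2
    have hdisj : Pairwise (Function.onFun Disjoint fun p => s p j) := by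
      intro p q hpq
      refine Set.disjoint_left.mpr fun z hzp hzq => ?_
      exact hpq (rnk_injective hzp.1 (hzp.2.trans hzq.2.symm))
    have hun : (⋃ p, s p j) = T := by
      ext z
      constructor
      · intro hz
        obtain ⟨p, hp⟩ := Set.mem_iUnion.mp hz
        exact hp.1
      · intro hz
        obtain ⟨p, hp⟩ := rnk_surj hz hj1 hj2
        exact Set.mem_iUnion.mpr ⟨p, hz, hp⟩
    have hsum := measure_iUnion (μ := ν) hdisj (fun p => hsmeas p j)
    rw [hun, hT1, tsum_fintype] at hsum
    have hsum2 : ∑ p : Fin (N + 1), ν (s (Fin.last N) j) = 1 := by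
      rw [← Finset.sum_congr rfl fun p _ => hconst p j]
      exact hsum.symm
    rw [Finset.sum_const, Finset.card_univ, Fintype.card_fin, nsmul_eq_mul] at hsum2
    have hc : ((N : ℝ≥0∞) + 1) * ν (s (Fin.last N) j) = 1 := by
      rw [Nat.cast_add, Nat.cast_one] at hsum2
      exact hsum2
    calc ν (s (Fin.last N) j)
        = ((N : ℝ≥0∞) + 1)⁻¹ * (((N : ℝ≥0∞) + 1) * ν (s (Fin.last N) j)) := by
          rw [← mul_assoc, ENNReal.inv_mul_cancel hNne hNtop, one_mul]
      _ = ((N : ℝ≥0∞) + 1)⁻¹ := by rw [hc, mul_one]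
  have hET : E ∩ T = ⋃ j ∈ Finset.Icc 1 κ, s (Fin.last N) j := by
    ext z
    simp only [Set.mem_inter_iff, Set.mem_setOf_eq, Set.mem_iUnion, Finset.mem_Icc,
      hEdef, hsdef, hTdef, exists_prop]
    constructor
    · rintro ⟨hc, hz⟩
      refine ⟨rnk z (Fin.last N), ⟨rnk_pos _ _, ?_⟩, hz, rfl⟩
      rw [rnk_last_eq hz]
      omega
    · rintro ⟨j, ⟨hj1, hj2⟩, hz, hr⟩
      refine ⟨?_, hz⟩
      have h2 := rnk_last_eq hz
      rw [hr] at h2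
      omega
  have hνET : ν (E ∩ T) = (κ : ℝ≥0∞) * ((N : ℝ≥0∞) + 1)⁻¹ := by
    rw [hET, measure_biUnion_finset ?_ (fun j _ => hsmeas _ j)]
    · rw [Finset.sum_congr rfl fun j hj => by
        rw [hpart j (Finset.mem_Icc.mp hj).1 (le_trans (Finset.mem_Icc.mp hj).2 (by omega))]]
      rw [Finset.sum_const, Nat.card_Icc, nsmul_eq_mul]
      norm_num
    · intro p hp q hq hpq
      refine Set.disjoint_left.mpr fun z hzp hzq => ?_
      exact hpq (hzp.2.symm.trans hzq.2)
  have hνE : ν E = ν (E ∩ T) := by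
    refine le_antisymm ?_ (measure_mono Set.inter_subset_left)
    calc ν E ≤ ν ((E ∩ T) ∪ Tᶜ) := by
          refine measure_mono fun z hz => ?_
          by_cases hzT : z ∈ T
          · exact Or.inl ⟨hz, hzT⟩
          · exact Or.inr hzT
      _ ≤ ν (E ∩ T) + ν Tᶜ := measure_union_le _ _
      _ = ν (E ∩ T) := by rw [hTc, add_zero]
  rw [hPE, hνE, hνET]
  rw [ENNReal.ofReal_div_of_pos (by positivity), div_eq_mul_inv]
  congr 1
  · exact (ENNReal.ofReal_natCast κ).symm ▸ rfl
  · congr 1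
    rw [show ((N : ℝ) + 1) = ((N + 1 : ℕ) : ℝ) by push_cast; ring, ENNReal.ofReal_natCast]
    push_cast
    ring
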